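/- Let $G$ be a group and let $A, B, C$ be subgroups with $B \leq C$. Assume that the products $AB$, $AC$, and $(A \cap C)B$ are all subgroups of $G$. Then the map sending the coset $c \cdot (A\cap C)B$ to the coset $c \cdot AB$ is a well-defined bijection from $C/((A\cap C)B)$ onto $AC/AB$; in particular the indices $[AC : AB]$ and $[C : (A\cap C)B]$ are equal. -/

import Mathlib

open Pointwise

/-- Index equality for products of subgroups: if `B ≤ C` and the products `AB`, `AC`,
`(A ⊓ C)B` are subgroups, then `c • (A ⊓ C)B ↦ c • AB` is a well-defined bijection
`C/((A ⊓ C)B) ≃ AC/AB`; in particular `[AC : AB] = [C : (A ⊓ C)B]`. -/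
theorem index_eq_of_products_subgroups {G : Type*} [Group G]
    (A B C AB AC ACB : Subgroup G) (hBC : B ≤ C)
    (hAB : (AB : Set G) = (A : Set G) * (B : Set G))
    (hAC : (AC : Set G) = (A : Set G) * (C : Set G))
    (hACB : (ACB : Set G) = ((A ⊓ C : Subgroup G) : Set G) * (B : Set G)) :
    (∃ e : C ⧸ ACB.subgroupOf C ≃ AC ⧸ AB.subgroupOf AC,
      ∀ c : C, e (QuotientGroup.mk c) =
        QuotientGroup.mk (⟨(c : G), by
          have h : (1 : G) * (c : G) ∈ (A : Set G) * (C : Set G) :=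
            Set.mul_mem_mul A.one_mem c.2
          rw [one_mul] at h
          rw [← hAC] at h
          exact h⟩ : AC)) ∧
    AB.relIndex AC = ACB.relIndex C := by
  -- the inclusion C → AC
  have hCsub : ∀ c : C, (c : G) ∈ AC := by
    intro c
    have h : (1 : G) * (c : G) ∈ (A : Set G) * (C : Set G) :=
      Set.mul_mem_mul A.one_mem c.2
    rw [one_mul] at h
    rw [← hAC] at h
    exact h
  set g : C → AC := fun c => ⟨(c : G), hCsub c⟩ with hg
  -- well-definedness
  have hresp : ∀ c c' : C, (QuotientGroup.leftRel (ACB.subgroupOf C)).r c c' →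
      (QuotientGroup.leftRel (AB.subgroupOf AC)).r (g c) (g c') := by
    intro c c' h
    rw [QuotientGroup.leftRel_apply] at h ⊢
    have h' : (c : G)⁻¹ * (c' : G) ∈ ACB := h
    rw [← SetLike.mem_coe, hACB] at h'
    obtain ⟨a, ha, b, hb, hab⟩ := h'
    have : (c : G)⁻¹ * (c' : G) ∈ (A : Set G) * (B : Set G) :=
      ⟨a, ha.1, b, hb, hab⟩
    rw [← hAB] at this
    exact this
  set f : C ⧸ ACB.subgroupOf C → AC ⧸ AB.subgroupOf AC :=
    Quotient.map' g hresp with hf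
  have hfmk : ∀ c : C, f (QuotientGroup.mk c) = QuotientGroup.mk (g c) := fun c => rfl
  -- injectivity
  have hinj : Function.Injective f := by
    intro x y
    induction x using Quotient.inductionOn'
    induction y using Quotient.inductionOn'
    rename_i c c'
    intro h
    have h' := Quotient.exact' (s₁ := QuotientGroup.leftRel (AB.subgroupOf AC)) h
    rw [QuotientGroup.leftRel_apply] at h'
    have h'' : (c : G)⁻¹ * (c' : G) ∈ AB := h'
    rw [← SetLike.mem_coe, hAB] at h''
    obtain ⟨a, ha, b, hb, hab⟩ := h''
    apply Quotient.sound'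
    rw [QuotientGroup.leftRel_apply]
    show (c : G)⁻¹ * (c' : G) ∈ ACB
    have haC : a ∈ C := by
      have : a = (c : G)⁻¹ * (c' : G) * b⁻¹ := by
        rw [← hab]; group
      rw [this]
      exact mul_mem (mul_mem (inv_mem c.2) c'.2) (inv_mem (hBC hb))
    rw [← SetLike.mem_coe, hACB]
    exact ⟨a, ⟨ha, haC⟩, b, hb, hab⟩
  -- surjectivity
  have hsurj : Function.Surjective f := by
    intro q
    induction q using Quotient.inductionOn'
    rename_i x
    have hx : (x : G)⁻¹ ∈ (A : Set G) * (C : Set G) := by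
      rw [← hAC]; exact inv_mem x.2
    obtain ⟨a, ha, c', hc', hac⟩ := hx
    refine ⟨QuotientGroup.mk ⟨c'⁻¹, inv_mem hc'⟩, ?_⟩
    rw [hfmk]
    apply Quotient.sound'
    rw [QuotientGroup.leftRel_apply]
    show (g ⟨c'⁻¹, inv_mem hc'⟩ : G)⁻¹ * (x : G) ∈ AB
    have hxval : (x : G) = c'⁻¹ * a⁻¹ := by
      have : (x : G)⁻¹ = a * c' := hac.symm
      rw [← inv_inv (x : G), this, mul_inv_rev]
    have : (g ⟨c'⁻¹, inv_mem hc'⟩ : G)⁻¹ * (x : G) = a⁻¹ := by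
      simp [hg, hxval]
    rw [this, ← SetLike.mem_coe, hAB]
    exact ⟨a⁻¹, inv_mem ha, 1, B.one_mem, mul_one _⟩
  refine ⟨⟨Equiv.ofBijective f ⟨hinj, hsurj⟩, fun c => hfmk c⟩, ?_⟩
  rw [Subgroup.relIndex, Subgroup.relIndex, Subgroup.index, Subgroup.index]
  exact Nat.card_congr (Equiv.ofBijective f ⟨hinj, hsurj⟩).symm
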